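/- arXiv:2303.06533 — 4 statements merged into one kernel-verified Lean document; each statement's English description precedes it below -/
import Mathlib

section
/- If a probability measure μ on a metric space (E,d) satisfies the T₁(C) inequality W₁(μ,ν) ≤ √(2C·H(ν|μ)) for all ν, then μ has normal concentration: for every Borel set A with μ(A) ≥ 1/2 and every ε > √(2C log 2), one has μ(A_ε) ≥ 1 − exp(−(ε − √(2C log 2))²/(2C)), where A_ε is the open ε-neighborhood of A. -/
open MeasureTheory ENNReal
open scoped Classical

/-- The set of couplings of `μ` and `ν`. -/
def IsCoupling {E : Type*} [MeasurableSpace E] (π : Measure (E × E)) (μ ν : Measure E) : Prop :=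
  π.map Prod.fst = μ ∧ π.map Prod.snd = ν

/-- The Wasserstein distance of order `p` between two measures on a metric space. -/
noncomputable def wassersteinDist {E : Type*} [MetricSpace E] [MeasurableSpace E]
    (p : ℝ) (μ ν : Measure E) : ℝ≥0∞ :=
  ⨅ (π : Measure (E × E)) (_ : IsCoupling π μ ν),
    (∫⁻ z, (edist z.1 z.2) ^ p ∂π) ^ (1 / p)

/-- The relative entropy (Kullback information) of `ν` with respect to `μ`. -/
noncomputable def relEntropy {E : Type*} [MeasurableSpace E] (ν μ : Measure E) : ℝ≥0∞ :=
  if ν ≪ μ then ENNReal.ofReal (∫ x, Real.log ((ν.rnDeriv μ x).toReal) ∂ν) else ⊤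

open EMetric in
/-- Easy direction of Kantorovich duality, first-marginal form. -/
lemma lint_fst_le {E : Type*} [MetricSpace E] [MeasurableSpace E] [BorelSpace E]
    (g : E → ℝ≥0∞) (hg : Measurable g) (hLip : ∀ x y : E, g x ≤ g y + edist x y)
    {π : Measure (E × E)} {μ ν : Measure E} (hπ : IsCoupling π μ ν) :
    ∫⁻ x, g x ∂μ ≤ ∫⁻ x, g x ∂ν + ∫⁻ z, edist z.1 z.2 ∂π := by
  have h1 : ∫⁻ x, g x ∂μ = ∫⁻ z, g z.1 ∂π := by
    rw [← hπ.1, lintegral_map hg measurable_fst]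
  have h2 : ∫⁻ x, g x ∂ν = ∫⁻ z, g z.2 ∂π := by
    rw [← hπ.2, lintegral_map hg measurable_snd]
  rw [h1, h2]
  calc ∫⁻ z, g z.1 ∂π ≤ ∫⁻ z, (g z.2 + edist z.1 z.2) ∂π :=
        lintegral_mono fun z => by simpa [edist_comm] using hLip z.1 z.2
    _ = ∫⁻ z, g z.2 ∂π + ∫⁻ z, edist z.1 z.2 ∂π :=
        lintegral_add_left (hg.comp measurable_snd) _

/-- Easy direction of Kantorovich duality, second-marginal form. -/
lemma lint_snd_le {E : Type*} [MetricSpace E] [MeasurableSpace E] [BorelSpace E]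
    (g : E → ℝ≥0∞) (hg : Measurable g) (hLip : ∀ x y : E, g x ≤ g y + edist x y)
    {π : Measure (E × E)} {μ ν : Measure E} (hπ : IsCoupling π μ ν) :
    ∫⁻ x, g x ∂ν ≤ ∫⁻ x, g x ∂μ + ∫⁻ z, edist z.1 z.2 ∂π := by
  have h1 : ∫⁻ x, g x ∂μ = ∫⁻ z, g z.1 ∂π := by
    rw [← hπ.1, lintegral_map hg measurable_fst]
  have h2 : ∫⁻ x, g x ∂ν = ∫⁻ z, g z.2 ∂π := by
    rw [← hπ.2, lintegral_map hg measurable_snd]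
  rw [h1, h2]
  calc ∫⁻ z, g z.2 ∂π ≤ ∫⁻ z, (g z.1 + edist z.1 z.2) ∂π :=
        lintegral_mono fun z => (hLip z.2 z.1).trans (by rw [edist_comm])
    _ = ∫⁻ z, g z.1 ∂π + ∫⁻ z, edist z.1 z.2 ∂π :=
        lintegral_add_left (hg.comp measurable_fst) _

lemma le_add_wasserstein {E : Type*} [MetricSpace E] [MeasurableSpace E]
    {μ ν : Measure E} {a c : ℝ≥0∞}
    (h : ∀ π : Measure (E × E), IsCoupling π μ ν → a ≤ c + ∫⁻ z, edist z.1 z.2 ∂π) :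
    a ≤ c + wassersteinDist 1 μ ν := by
  rw [← tsub_le_iff_left, wassersteinDist]
  refine le_iInf₂ fun π hπ => ?_
  rw [tsub_le_iff_left]
  simpa using h π hπ

lemma cond_isProb {E : Type*} [MeasurableSpace E] (μ : Measure E) [IsFiniteMeasure μ]
    {S : Set E} (h0 : μ S ≠ 0) :
    IsProbabilityMeasure ((μ S)⁻¹ • μ.restrict S) := by
  constructor
  rw [Measure.smul_apply, Measure.restrict_apply_univ, smul_eq_mul,
    ENNReal.inv_mul_cancel h0 (measure_ne_top μ S)]

lemma relEntropy_cond {E : Type*} [MeasurableSpace E] (μ : Measure E) [IsFiniteMeasure μ]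
    {S : Set E} (hS : MeasurableSet S) (h0 : μ S ≠ 0) :
    relEntropy ((μ S)⁻¹ • μ.restrict S) μ
      = ENNReal.ofReal (Real.log ((μ S).toReal)⁻¹) := by
  set ν : Measure E := (μ S)⁻¹ • μ.restrict S with hν
  haveI : IsProbabilityMeasure ν := cond_isProb μ h0
  have hac : ν ≪ μ := by
    rw [hν]
    exact Measure.AbsolutelyContinuous.smul_left
      Measure.restrict_le_self.absolutelyContinuous _
  rw [relEntropy, if_pos hac]
  have hrn : ν.rnDeriv μ =ᵐ[μ] (μ S)⁻¹ • S.indicator (1 : E → ℝ≥0∞) := by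
    have h1 : ν.rnDeriv μ =ᵐ[μ] (μ S)⁻¹ • (μ.restrict S).rnDeriv μ :=
      Measure.rnDeriv_smul_left_of_ne_top (μ.restrict S) μ (ENNReal.inv_ne_top.mpr h0)
    have h2 : (μ.restrict S).rnDeriv μ =ᵐ[μ] S.indicator 1 :=
      Measure.rnDeriv_restrict_self μ hS
    filter_upwards [h1, h2] with x hx1 hx2
    rw [hx1, Pi.smul_apply, hx2, Pi.smul_apply]
  have hrnν : ∀ᵐ x ∂ν, ν.rnDeriv μ x = (μ S)⁻¹ • S.indicator (1 : E → ℝ≥0∞) x :=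
    hac.ae_le hrn
  have hmem : ∀ᵐ x ∂ν, x ∈ S := by
    have : ν Sᶜ = 0 := by
      rw [hν, Measure.smul_apply, Measure.restrict_apply hS.compl,
        Set.compl_inter_self, measure_empty, smul_zero]
    exact (ae_iff).mpr this
  have hcongr : ∀ᵐ x ∂ν,
      Real.log ((ν.rnDeriv μ x).toReal) = Real.log ((μ S).toReal)⁻¹ := by
    filter_upwards [hrnν, hmem] with x hx hxS
    rw [hx, Set.indicator_of_mem hxS, Pi.one_apply, smul_eq_mul, mul_one,
      ENNReal.toReal_inv]
  rw [integral_congr_ae hcongr, integral_const, probReal_univ, one_smul]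

lemma real_core (C a b ε : ℝ) (hC : 0 < C) (ha1 : 1/2 ≤ a) (hb1 : 0 < b) (hb2 : b ≤ 1)
    (hε : Real.sqrt (2 * C * Real.log 2) < ε)
    (key : ε ≤ Real.sqrt (2 * C * Real.log a⁻¹) + Real.sqrt (2 * C * Real.log b⁻¹)) :
    b ≤ Real.exp (-(ε - Real.sqrt (2 * C * Real.log 2)) ^ 2 / (2 * C)) := by
  set δ := Real.sqrt (2 * C * Real.log 2) with hδdef
  have ha0 : (0:ℝ) < a := lt_of_lt_of_le (by norm_num) ha1
  have hlog1 : Real.log a⁻¹ ≤ Real.log 2 := by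
    apply Real.log_le_log (by positivity)
    rw [inv_le_comm₀ ha0 (by norm_num)]
    linarith
  have h1 : Real.sqrt (2 * C * Real.log a⁻¹) ≤ δ := by
    apply Real.sqrt_le_sqrt
    nlinarith
  have hLb : 0 ≤ Real.log b⁻¹ := Real.log_nonneg (one_le_inv_iff₀.mpr ⟨hb1, hb2⟩)
  have h2 : ε - δ ≤ Real.sqrt (2 * C * Real.log b⁻¹) := by linarith
  have h3 : (ε - δ) ^ 2 ≤ 2 * C * Real.log b⁻¹ := by
    have := Real.sq_sqrt (by positivity : 0 ≤ 2 * C * Real.log b⁻¹)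
    nlinarith [sub_nonneg.mpr hε.le]
  have h4 : Real.log b ≤ -(ε - δ) ^ 2 / (2 * C) := by
    rw [Real.log_inv] at h3
    rw [le_div_iff₀ (by positivity : (0:ℝ) < 2 * C)]
    nlinarith
  calc b = Real.exp (Real.log b) := (Real.exp_log hb1).symm
    _ ≤ _ := Real.exp_le_exp.mpr h4

open EMetric in
/-- `T₁(C)` implies normal (Gaussian) concentration. -/
theorem t1_implies_concentration {E : Type*} [MetricSpace E] [MeasurableSpace E] [BorelSpace E]
    (μ : Measure E) [IsProbabilityMeasure μ] (C : ℝ) (hC : 0 < C)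
    (hT1 : ∀ ν : Measure E, IsProbabilityMeasure ν →
      wassersteinDist 1 μ ν ≤ (ENNReal.ofReal (2 * C) * relEntropy ν μ) ^ (1 / 2 : ℝ)) :
    ∀ A : Set E, MeasurableSet A → (1 / 2 : ℝ≥0∞) ≤ μ A →
      ∀ ε : ℝ, Real.sqrt (2 * C * Real.log 2) < ε →
        ENNReal.ofReal (1 - Real.exp (-(ε - Real.sqrt (2 * C * Real.log 2)) ^ 2 / (2 * C)))
          ≤ μ (Metric.thickening ε A) := by
  intro A hA hA2 ε hε
  set δ := Real.sqrt (2 * C * Real.log 2) with hδdef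
  set B := (Metric.thickening ε A)ᶜ with hBdef
  have hB : MeasurableSet B := Metric.isOpen_thickening.measurableSet.compl
  have hthick : Metric.thickening ε A = Bᶜ := (compl_compl _).symm
  have hexp0 : 0 ≤ Real.exp (-(ε - δ) ^ 2 / (2 * C)) := Real.exp_nonneg _
  by_cases hB0 : μ B = 0
  · rw [hthick, measure_compl hB (measure_ne_top μ B), hB0, measure_univ, tsub_zero]
    exact ENNReal.ofReal_le_one.mpr (by linarith)
  · have hA0 : μ A ≠ 0 := by
      intro h
      rw [h, le_zero_iff] at hA2
      exact (by norm_num : (1/2 : ℝ≥0∞) ≠ 0) hA2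
    set νA : Measure E := (μ A)⁻¹ • μ.restrict A with hνA
    set νB : Measure E := (μ B)⁻¹ • μ.restrict B with hνB
    haveI : IsProbabilityMeasure νA := cond_isProb μ hA0
    haveI : IsProbabilityMeasure νB := cond_isProb μ hB0
    set g : E → ℝ≥0∞ := fun x => min (infEdist x A) (ENNReal.ofReal ε) with hgdef
    have hgm : Measurable g := (continuous_infEdist.min continuous_const).measurable
    have hgLip : ∀ x y : E, g x ≤ g y + edist x y := by
      intro x y
      calc g x ≤ min (infEdist y A + edist x y) (ENNReal.ofReal ε + edist x y) :=
            min_le_min infEdist_le_infEdist_add_edist (le_add_right le_rfl)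
        _ = g y + edist x y := min_add_add_right _ _ _
    have IA : ∫⁻ x, g x ∂νA = 0 := by
      rw [hνA, lintegral_smul_measure]
      have : ∫⁻ x in A, g x ∂μ = ∫⁻ _ in A, 0 ∂μ := by
        refine setLIntegral_congr_fun hA (fun x hx => ?_)
        simp [hgdef, infEdist_zero_of_mem hx]
        exact Or.inl (infEdist_zero_of_mem hx)
      simp [this]
    have IB : ∫⁻ x, g x ∂νB = ENNReal.ofReal ε := by
      rw [hνB, lintegral_smul_measure]
      have h1 : ∫⁻ x in B, g x ∂μ = ∫⁻ _ in B, ENNReal.ofReal ε ∂μ := by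
        refine setLIntegral_congr_fun hB (fun x hx => ?_)
        rw [hgdef]
        exact min_eq_right
          (le_of_not_gt fun h => hx (Metric.mem_thickening_iff_infEdist_lt.mpr h))
      rw [h1, setLIntegral_const, smul_eq_mul, ← mul_assoc,
        mul_comm (μ B)⁻¹ (ENNReal.ofReal ε), mul_assoc,
        ENNReal.inv_mul_cancel hB0 (measure_ne_top μ B), mul_one]
    have WA : ∫⁻ x, g x ∂μ ≤ wassersteinDist 1 μ νA := by
      have h := le_add_wasserstein (μ := μ) (ν := νA) (a := ∫⁻ x, g x ∂μ) (c := 0)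
        (fun π hπ => by
          have := lint_fst_le g hgm hgLip hπ
          rwa [IA, zero_add, ← zero_add (∫⁻ z, edist z.1 z.2 ∂π)] at this)
      simpa using h
    have WB : ENNReal.ofReal ε ≤ ∫⁻ x, g x ∂μ + wassersteinDist 1 μ νB :=
      le_add_wasserstein (fun π hπ => by
        have := lint_snd_le g hgm hgLip hπ
        rwa [IB] at this)
    have key0 : ENNReal.ofReal ε ≤ wassersteinDist 1 μ νA + wassersteinDist 1 μ νB :=
      WB.trans (add_le_add WA le_rfl)
    set a := (μ A).toReal with hadef
    set b := (μ B).toReal with hbdef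
    have ha2 : (1/2 : ℝ) ≤ a := by
      have := ENNReal.toReal_mono (measure_ne_top μ A) hA2
      simpa using this
    have ha0 : (0:ℝ) < a := lt_of_lt_of_le (by norm_num) ha2
    have ha1 : a ≤ 1 := by
      rw [hadef]
      exact ENNReal.toReal_le_of_le_ofReal (by norm_num) (by simpa using prob_le_one)
    have hb0 : (0:ℝ) < b := ENNReal.toReal_pos hB0 (measure_ne_top μ B)
    have hb1 : b ≤ 1 := by
      rw [hbdef]
      exact ENNReal.toReal_le_of_le_ofReal (by norm_num) (by simpa using prob_le_one)
    have hLa : 0 ≤ Real.log a⁻¹ := Real.log_nonneg (one_le_inv_iff₀.mpr ⟨ha0, ha1⟩)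
    have hLb : 0 ≤ Real.log b⁻¹ := Real.log_nonneg (one_le_inv_iff₀.mpr ⟨hb0, hb1⟩)
    have sA : wassersteinDist 1 μ νA
        ≤ ENNReal.ofReal (Real.sqrt (2 * C * Real.log a⁻¹)) := by
      refine (hT1 νA inferInstance).trans_eq ?_
      rw [relEntropy_cond μ hA hA0, ← ENNReal.ofReal_mul (by positivity),
        ENNReal.ofReal_rpow_of_nonneg (by positivity) (by norm_num), ← Real.sqrt_eq_rpow]
    have sB : wassersteinDist 1 μ νB
        ≤ ENNReal.ofReal (Real.sqrt (2 * C * Real.log b⁻¹)) := by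
      refine (hT1 νB inferInstance).trans_eq ?_
      rw [relEntropy_cond μ hB hB0, ← ENNReal.ofReal_mul (by positivity),
        ENNReal.ofReal_rpow_of_nonneg (by positivity) (by norm_num), ← Real.sqrt_eq_rpow]
    have keyR : ε ≤ Real.sqrt (2 * C * Real.log a⁻¹) + Real.sqrt (2 * C * Real.log b⁻¹) := by
      have h := key0.trans (add_le_add sA sB)
      rw [← ENNReal.ofReal_add (by positivity) (by positivity)] at h
      exact (ENNReal.ofReal_le_ofReal_iff (by positivity)).mp h
    have hb := real_core C a b ε hC ha2 hb0 hb1 hε keyR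
    rw [hthick, measure_compl hB (measure_ne_top μ B), measure_univ,
      (ENNReal.ofReal_toReal (measure_ne_top μ B)).symm.trans rfl, ← ENNReal.ofReal_one,
      ← ENNReal.ofReal_sub _ hb0.le]
    exact ENNReal.ofReal_le_ofReal (by linarith)
end

section
/- If a probability measure μ on a metric space (E,d) satisfies the Gaussian concentration bound ∫ e^{f − μ(f)} dμ ≤ e^{D‖f‖²_Lip} for all Lipschitz f (with constant D > 0), then there exists x₀ ∈ E such that ∫ exp(d(x₀,x)²/(16D)) dμ(x) ≤ 3·exp(μ(d)²/D), where μ(d) = ∫ d(x,x₀) dμ(x). -/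
open MeasureTheory ENNReal
open scoped Classical NNReal

/-- The Lipschitz seminorm `‖f‖_Lip = sup_{x ≠ y} |f x − f y| / d(x,y)`. -/
noncomputable def lipNorm {E : Type*} [MetricSpace E] (f : E → ℝ) : ℝ :=
  ⨆ p : {p : E × E // p.1 ≠ p.2}, |f (p : E × E).1 - f (p : E × E).2| / dist (p : E × E).1 (p : E × E).2

lemma lipNorm_nonneg {E : Type*} [MetricSpace E] (f : E → ℝ) : 0 ≤ lipNorm f :=
  Real.iSup_nonneg fun _ => div_nonneg (abs_nonneg _) dist_nonneg

lemma lipNorm_le {E : Type*} [MetricSpace E] {f : E → ℝ} {K : ℝ} (hK : 0 ≤ K)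
    (h : ∀ x y, |f x - f y| ≤ K * dist x y) : lipNorm f ≤ K := by
  refine Real.iSup_le (fun p => ?_) hK
  obtain ⟨⟨x, y⟩, hxy⟩ := p
  have hd : 0 < dist x y := dist_pos.2 hxy
  rw [div_le_iff₀ hd]
  exact h x y

lemma gauss_key (b a : ℝ) (hb : 0 < b) :
    (fun l : ℝ => Real.exp (a * l - b * l ^ 2))
      = fun l => Real.exp (a ^ 2 / (4 * b)) * Real.exp (-b * (l - a / (2 * b)) ^ 2) := by
  funext l
  rw [← Real.exp_add]
  congr 1
  field_simp
  ring

lemma gauss_integrable (b a : ℝ) (hb : 0 < b) :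
    Integrable (fun l : ℝ => Real.exp (a * l - b * l ^ 2)) := by
  rw [gauss_key b a hb]
  exact ((integrable_exp_neg_mul_sq hb).comp_sub_right (a / (2 * b))).const_mul _

lemma gauss_integral (b a : ℝ) (hb : 0 < b) :
    ∫ l : ℝ, Real.exp (a * l - b * l ^ 2)
      = Real.exp (a ^ 2 / (4 * b)) * Real.sqrt (Real.pi / b) := by
  rw [gauss_key b a hb, MeasureTheory.integral_const_mul,
    integral_sub_right_eq_self (fun l : ℝ => Real.exp (-b * l ^ 2)) (a / (2 * b)),
    integral_gaussian]

/-- A Gaussian concentration bound `∫ e^{f − μ(f)} dμ ≤ e^{D‖f‖²_Lip}` for all Lipschitz `f`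
implies a Gaussian moment bound:
`∫ exp(d(x₀,x)²/(16D)) dμ ≤ 3 exp(μ(d)²/D)` for some point `x₀`. -/
theorem gaussianConcentration_to_gaussianMoment
    {E : Type*} [MetricSpace E] [Nonempty E] [MeasurableSpace E] [BorelSpace E]
    (μ : Measure E) [IsProbabilityMeasure μ] (D : ℝ) (hD : 0 < D)
    (hGCB : ∀ f : E → ℝ, (∃ K : ℝ≥0, LipschitzWith K f) →
      Integrable f μ ∧
        ∫⁻ x, ENNReal.ofReal (Real.exp (f x - ∫ y, f y ∂μ)) ∂μ
          ≤ ENNReal.ofReal (Real.exp (D * lipNorm f ^ 2))) :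
    ∃ x₀ : E,
      ∫⁻ x, ENNReal.ofReal (Real.exp (dist x₀ x ^ 2 / (16 * D))) ∂μ
        ≤ ENNReal.ofReal (3 * Real.exp ((∫ x, dist x₀ x ∂μ) ^ 2 / D)) := by
  obtain ⟨x₀⟩ := ‹Nonempty E›
  refine ⟨x₀, ?_⟩
  set m : ℝ := ∫ x, dist x₀ x ∂μ with hmdef
  have hm0 : 0 ≤ m := integral_nonneg fun x => dist_nonneg
  have hgm : Measurable (fun x : E => dist x₀ x) := (continuous_const.dist continuous_id).measurable
  have h4D : (0:ℝ) < 4 * D := by linarith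
  have h3D : (0:ℝ) < 3 * D := by linarith
  -- MGF bound from the concentration hypothesis
  have hmgf : ∀ l : ℝ, 0 ≤ l →
      ∫⁻ x, ENNReal.ofReal (Real.exp (l * dist x₀ x)) ∂μ
        ≤ ENNReal.ofReal (Real.exp (l * m + D * l ^ 2)) := by
    intro l hl
    have hlipf : LipschitzWith l.toNNReal (fun x => l * dist x₀ x) := by
      refine LipschitzWith.of_dist_le_mul fun x y => ?_
      rw [Real.dist_eq, ← mul_sub, abs_mul, abs_of_nonneg hl, Real.coe_toNNReal _ hl]
      refine mul_le_mul_of_nonneg_left ?_ hl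
      simpa [dist_comm] using abs_dist_sub_le x y x₀
    obtain ⟨hint, hbound⟩ := hGCB (fun x => l * dist x₀ x) ⟨l.toNNReal, hlipf⟩
    have hμf : (∫ y, l * dist x₀ y ∂μ) = l * m := integral_const_mul l (fun x => dist x₀ x)
    have hlip2 : lipNorm (fun x => l * dist x₀ x) ≤ l := by
      refine lipNorm_le hl fun x y => ?_
      rw [← mul_sub, abs_mul, abs_of_nonneg hl]
      refine mul_le_mul_of_nonneg_left ?_ hl
      simpa [dist_comm] using abs_dist_sub_le x y x₀
    have hexp : D * lipNorm (fun x => l * dist x₀ x) ^ 2 ≤ D * l ^ 2 :=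
      mul_le_mul_of_nonneg_left (pow_le_pow_left₀ (lipNorm_nonneg _) hlip2 2) hD.le
    calc ∫⁻ x, ENNReal.ofReal (Real.exp (l * dist x₀ x)) ∂μ
        = ∫⁻ x, ENNReal.ofReal (Real.exp (l * dist x₀ x - ∫ y, l * dist x₀ y ∂μ))
            * ENNReal.ofReal (Real.exp (l * m)) ∂μ := by
          refine lintegral_congr fun x => ?_
          rw [← ENNReal.ofReal_mul (Real.exp_nonneg _), ← Real.exp_add, hμf, sub_add_cancel]
      _ = (∫⁻ x, ENNReal.ofReal (Real.exp (l * dist x₀ x - ∫ y, l * dist x₀ y ∂μ)) ∂μ)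
            * ENNReal.ofReal (Real.exp (l * m)) :=
          lintegral_mul_const' _ _ ENNReal.ofReal_ne_top
      _ ≤ ENNReal.ofReal (Real.exp (D * lipNorm (fun x => l * dist x₀ x) ^ 2))
            * ENNReal.ofReal (Real.exp (l * m)) := mul_le_mul_left hbound _
      _ ≤ ENNReal.ofReal (Real.exp (l * m + D * l ^ 2)) := by
          rw [← ENNReal.ofReal_mul (Real.exp_nonneg _), ← Real.exp_add]
          apply ENNReal.ofReal_le_ofReal
          exact Real.exp_le_exp.2 (by linarith)
  -- pointwise-in-l bound
  have hpt : ∀ l : ℝ,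
      ∫⁻ x, ENNReal.ofReal (Real.exp (dist x₀ x * l - 4 * D * l ^ 2)) ∂μ
        ≤ ENNReal.ofReal (Real.exp (0 * l - 4 * D * l ^ 2))
          + ENNReal.ofReal (Real.exp (m * l - 3 * D * l ^ 2)) := by
    intro l
    have hsplit : ∀ x : E, Real.exp (dist x₀ x * l - 4 * D * l ^ 2)
        = Real.exp (l * dist x₀ x) * Real.exp (-(4 * D * l ^ 2)) := by
      intro x; rw [← Real.exp_add]; ring_nf
    rcases le_or_gt 0 l with hl | hl
    · calc ∫⁻ x, ENNReal.ofReal (Real.exp (dist x₀ x * l - 4 * D * l ^ 2)) ∂μ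
          = (∫⁻ x, ENNReal.ofReal (Real.exp (l * dist x₀ x)) ∂μ)
              * ENNReal.ofReal (Real.exp (-(4 * D * l ^ 2))) := by
            rw [← lintegral_mul_const' _ _ ENNReal.ofReal_ne_top]
            exact lintegral_congr fun x => by
              rw [hsplit x, ENNReal.ofReal_mul (Real.exp_nonneg _)]
        _ ≤ ENNReal.ofReal (Real.exp (l * m + D * l ^ 2))
              * ENNReal.ofReal (Real.exp (-(4 * D * l ^ 2))) :=
            mul_le_mul_left (hmgf l hl) _
        _ = ENNReal.ofReal (Real.exp (m * l - 3 * D * l ^ 2)) := by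
            rw [← ENNReal.ofReal_mul (Real.exp_nonneg _), ← Real.exp_add]
            congr 2
            ring
        _ ≤ _ := le_add_self
    · calc ∫⁻ x, ENNReal.ofReal (Real.exp (dist x₀ x * l - 4 * D * l ^ 2)) ∂μ
          ≤ ∫⁻ _x, ENNReal.ofReal (Real.exp (0 * l - 4 * D * l ^ 2)) ∂μ := by
            refine lintegral_mono fun x => ENNReal.ofReal_le_ofReal ?_
            refine Real.exp_le_exp.2 ?_
            have hx : dist x₀ x * l ≤ 0 := mul_nonpos_of_nonneg_of_nonpos dist_nonneg hl.le
            nlinarith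
        _ = ENNReal.ofReal (Real.exp (0 * l - 4 * D * l ^ 2)) := by
            simp [lintegral_const, measure_univ]
        _ ≤ _ := le_self_add
  set c : ℝ := Real.sqrt (Real.pi / (4 * D)) with hcdef
  have hc0 : 0 < c := Real.sqrt_pos.2 (div_pos Real.pi_pos h4D)
  have hcne : ENNReal.ofReal c ≠ 0 := (ENNReal.ofReal_pos.2 hc0).ne'
  have hnn : ∀ a : ℝ, ∀ b : ℝ, 0 ≤ᵐ[volume] fun l : ℝ => Real.exp (a * l - b * l ^ 2) :=
    fun a b => Filter.Eventually.of_forall fun l => Real.exp_nonneg _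
  have hDx : ∀ x : E,
      ENNReal.ofReal (Real.exp (dist x₀ x ^ 2 / (16 * D))) * ENNReal.ofReal c
        = ∫⁻ l : ℝ, ENNReal.ofReal (Real.exp (dist x₀ x * l - 4 * D * l ^ 2)) := by
    intro x
    rw [← ofReal_integral_eq_lintegral_ofReal (gauss_integrable (4 * D) (dist x₀ x) h4D)
        (hnn _ _), gauss_integral (4 * D) (dist x₀ x) h4D,
      ENNReal.ofReal_mul (Real.exp_nonneg _)]
    congr 3
    · ring
  have hmeas : Measurable (Function.uncurry fun (x : E) (l : ℝ) =>
      ENNReal.ofReal (Real.exp (dist x₀ x * l - 4 * D * l ^ 2))) := by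
    apply Measurable.ennreal_ofReal
    apply Measurable.exp
    exact ((hgm.comp measurable_fst).mul measurable_snd).sub
      ((measurable_const.mul (measurable_snd.pow measurable_const)))
  have hM1 : Measurable (fun l : ℝ => ENNReal.ofReal (Real.exp (0 * l - 4 * D * l ^ 2))) := by
    fun_prop
  rw [← ENNReal.mul_le_mul_iff_left hcne ENNReal.ofReal_ne_top]
  calc (∫⁻ x, ENNReal.ofReal (Real.exp (dist x₀ x ^ 2 / (16 * D))) ∂μ) * ENNReal.ofReal c
      = ∫⁻ x, ENNReal.ofReal (Real.exp (dist x₀ x ^ 2 / (16 * D))) * ENNReal.ofReal c ∂μ :=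
        (lintegral_mul_const' _ _ ENNReal.ofReal_ne_top).symm
    _ = ∫⁻ x, (∫⁻ l : ℝ, ENNReal.ofReal (Real.exp (dist x₀ x * l - 4 * D * l ^ 2))) ∂μ :=
        lintegral_congr hDx
    _ = ∫⁻ l : ℝ, (∫⁻ x, ENNReal.ofReal (Real.exp (dist x₀ x * l - 4 * D * l ^ 2)) ∂μ) :=
        lintegral_lintegral_swap hmeas.aemeasurable
    _ ≤ ∫⁻ l : ℝ, (ENNReal.ofReal (Real.exp (0 * l - 4 * D * l ^ 2))
          + ENNReal.ofReal (Real.exp (m * l - 3 * D * l ^ 2))) :=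
        lintegral_mono hpt
    _ = ENNReal.ofReal (Real.exp (0 ^ 2 / (4 * (4 * D))) * Real.sqrt (Real.pi / (4 * D)))
          + ENNReal.ofReal (Real.exp (m ^ 2 / (4 * (3 * D))) * Real.sqrt (Real.pi / (3 * D))) := by
        rw [lintegral_add_left hM1,
          ← ofReal_integral_eq_lintegral_ofReal (gauss_integrable (4 * D) 0 h4D) (hnn _ _),
          ← ofReal_integral_eq_lintegral_ofReal (gauss_integrable (3 * D) m h3D) (hnn _ _),
          gauss_integral (4 * D) 0 h4D, gauss_integral (3 * D) m h3D]
    _ ≤ ENNReal.ofReal (3 * Real.exp (m ^ 2 / D)) * ENNReal.ofReal c := by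
        rw [← ENNReal.ofReal_add (by positivity) (by positivity),
          ← ENNReal.ofReal_mul (by positivity)]
        apply ENNReal.ofReal_le_ofReal
        have h1 : Real.sqrt (Real.pi / (3 * D)) = Real.sqrt (4 / 3) * c := by
          rw [hcdef, ← Real.sqrt_mul (by norm_num : (0:ℝ) ≤ 4 / 3)]
          congr 1
          field_simp
        have h2 : Real.sqrt ((4 : ℝ) / 3) ≤ 2 := by
          rw [show (2:ℝ) = Real.sqrt 4 by
            rw [show (4:ℝ) = 2 ^ 2 by norm_num, Real.sqrt_sq (by norm_num : (0:ℝ) ≤ 2)]]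
          exact Real.sqrt_le_sqrt (by norm_num)
        have hE1 : Real.exp (m ^ 2 / (4 * (3 * D))) ≤ Real.exp (m ^ 2 / D) :=
          Real.exp_le_exp.2 (div_le_div_of_nonneg_left (sq_nonneg m) hD (by linarith))
        have hE2 : (1:ℝ) ≤ Real.exp (m ^ 2 / D) := Real.one_le_exp (by positivity)
        have hE3 : (0:ℝ) < Real.exp (m ^ 2 / (4 * (3 * D))) := Real.exp_pos _
        have h02 : (0:ℝ) ^ 2 / (4 * (4 * D)) = 0 := by norm_num
        rw [h02, Real.exp_zero, h1, one_mul]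
        have hs0 : (0:ℝ) ≤ Real.sqrt ((4:ℝ) / 3) := Real.sqrt_nonneg _
        nlinarith [mul_le_mul hE1 h2 hs0 (Real.exp_pos (m ^ 2 / D)).le, hc0.le,
          mul_le_mul_of_nonneg_right hE2 hc0.le]
end

section
/- If a probability measure μ on a metric space (E,d) satisfies ∫ exp(a·d(x₀,x)²) dμ(x) ≤ b for some x₀ ∈ E, a > 0, b ≥ 1, then for every Lipschitz f : E → ℝ one has ∫ e^{f − μ(f)} dμ ≤ e^{D‖f‖²_Lip} with D = b²e/(2a√π). -/
open MeasureTheory ENNReal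
open scoped Classical NNReal

set_option maxHeartbeats 1000000 in
/-- A Gaussian moment bound `∫ exp(a·d(x₀,x)²) dμ ≤ b` (with `a > 0`, `b ≥ 1`) implies the
Gaussian concentration bound `∫ e^{f − μ(f)} dμ ≤ e^{D‖f‖²_Lip}` with `D = b²e/(2a√π)`. -/
theorem gaussianMoment_to_gaussianConcentration
    {E : Type*} [MetricSpace E] [MeasurableSpace E] [BorelSpace E]
    (μ : Measure E) [IsProbabilityMeasure μ] (x₀ : E) (a b : ℝ) (ha : 0 < a) (hb : 1 ≤ b)
    (hmom : ∫⁻ x, ENNReal.ofReal (Real.exp (a * dist x₀ x ^ 2)) ∂μ ≤ ENNReal.ofReal b) :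
    ∀ f : E → ℝ, (∃ K : ℝ≥0, LipschitzWith K f) →
      Integrable f μ ∧
        ∫⁻ x, ENNReal.ofReal (Real.exp (f x - ∫ y, f y ∂μ)) ∂μ
          ≤ ENNReal.ofReal
              (Real.exp (b ^ 2 * Real.exp 1 / (2 * a * Real.sqrt Real.pi) * lipNorm f ^ 2)) := by
  intro f hf
  obtain ⟨K, hK⟩ := hf
  have hb0 : (0:ℝ) < b := by linarith
  set L := lipNorm f with hLdef
  set s := Real.sqrt Real.pi with hsdef
  have hsp : 0 < s := Real.sqrt_pos.2 Real.pi_pos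
  have hes : s < Real.exp 1 := by
    have h1 := Real.pi_lt_d2
    have h2 := Real.exp_one_gt_d9
    refine (Real.sqrt_lt' (Real.exp_pos 1)).2 ?_
    nlinarith
  -- Lipschitz seminorm facts
  have hbdd : BddAbove (Set.range fun p : {p : E × E // p.1 ≠ p.2} =>
      |f (p : E × E).1 - f (p : E × E).2| / dist (p : E × E).1 (p : E × E).2) := by
    refine ⟨K, ?_⟩
    rintro r ⟨p, rfl⟩
    have hd : 0 < dist (p : E × E).1 (p : E × E).2 := dist_pos.2 p.2
    rw [div_le_iff₀ hd]
    have := hK.dist_le_mul (p : E × E).1 (p : E × E).2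
    rwa [Real.dist_eq] at this
  have hL0 : 0 ≤ L :=
    Real.iSup_nonneg fun p => div_nonneg (abs_nonneg _) dist_nonneg
  have hub : ∀ x y : E, |f x - f y| ≤ L * dist x y := by
    intro x y
    rcases eq_or_ne x y with rfl | hxy
    · simp
    · have hd : 0 < dist x y := dist_pos.2 hxy
      have h1 : |f x - f y| / dist x y ≤ L := le_ciSup hbdd ⟨(x, y), hxy⟩
      rw [div_le_iff₀ hd] at h1
      exact h1
  clear_value L s
  -- the Gaussian weight
  set G : E → ℝ := fun x => Real.exp (a * dist x₀ x ^ 2) with hGdef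
  have hGc : Continuous G := by
    rw [hGdef]
    exact Real.continuous_exp.comp ((continuous_const.mul
      ((continuous_const.dist continuous_id).pow 2)))
  have hGnn : ∀ x, 0 ≤ G x := fun x => (Real.exp_pos _).le
  have hGint : Integrable G μ := by
    refine ⟨hGc.aestronglyMeasurable, ?_⟩
    rw [hasFiniteIntegral_iff_ofReal (Filter.Eventually.of_forall hGnn)]
    simp only [hGdef]
    exact lt_of_le_of_lt hmom ENNReal.ofReal_lt_top
  have hBle : ∫ x, G x ∂μ ≤ b := by
    have h1 : ENNReal.ofReal (∫ x, G x ∂μ) = ∫⁻ x, ENNReal.ofReal (G x) ∂μ :=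
      ofReal_integral_eq_lintegral_ofReal hGint (Filter.Eventually.of_forall hGnn)
    have h2 : ∫⁻ x, ENNReal.ofReal (G x) ∂μ ≤ ENNReal.ofReal b := by
      simp only [hGdef]; exact hmom
    rw [← h1] at h2
    exact (ENNReal.ofReal_le_ofReal_iff hb0.le).1 h2
  -- the centered function
  set g : E → ℝ := fun x => f x - f x₀ with hgdef
  have hgb : ∀ x, |g x| ≤ L * dist x₀ x := by
    intro x
    have := hub x x₀
    rw [dist_comm] at this
    exact this
  have hfc : Continuous f := hK.continuous
  have hgc : Continuous g := hfc.sub continuous_const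
  set M : ℝ := Real.exp (L ^ 2 / (4 * a)) with hMdef
  have hM0 : 0 < M := Real.exp_pos _
  have hquad : ∀ t : ℝ, 0 ≤ t → L * t ≤ L ^ 2 / (4 * a) + a * t ^ 2 := by
    intro t ht
    have h : L * t - a * t ^ 2 ≤ L ^ 2 / (4 * a) := by
      rw [le_div_iff₀ (by linarith : (0:ℝ) < 4 * a)]
      nlinarith [sq_nonneg (L - 2 * a * t)]
    linarith
  have hdom : ∀ x, Real.exp (L * dist x₀ x) ≤ M * G x := by
    intro x
    rw [hMdef, hGdef, ← Real.exp_add]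
    exact Real.exp_le_exp.2 (hquad _ dist_nonneg)
  have hdomg : ∀ x, Real.exp |g x| ≤ M * G x := fun x =>
    (Real.exp_le_exp.2 (hgb x)).trans (hdom x)
  have hMG : Integrable (fun x => M * G x) μ := hGint.const_mul M
  -- integrability of exp(g), exp(-g)
  have hint_exp : Integrable (fun x => Real.exp (g x)) μ := by
    refine hMG.mono' (Real.continuous_exp.comp hgc).aestronglyMeasurable
      (Filter.Eventually.of_forall fun x => ?_)
    rw [Real.norm_eq_abs, abs_of_pos (Real.exp_pos _)]
    exact le_trans (Real.exp_le_exp.2 (le_abs_self _)) (hdomg x)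
  have hint_expneg : Integrable (fun x => Real.exp (-g x)) μ := by
    refine hMG.mono' (Real.continuous_exp.comp hgc.neg).aestronglyMeasurable
      (Filter.Eventually.of_forall fun x => ?_)
    rw [Real.norm_eq_abs, abs_of_pos (Real.exp_pos _)]
    exact le_trans (Real.exp_le_exp.2 (neg_le_abs _)) (hdomg x)
  -- integrability of f
  have hint_f : Integrable f μ := by
    refine ((hGint.const_mul M).add (integrable_const |f x₀|)).mono'
      hfc.aestronglyMeasurable (Filter.Eventually.of_forall fun x => ?_)
    rw [Real.norm_eq_abs]
    have h1 : |f x| ≤ |g x| + |f x₀| := by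
      have : f x = g x + f x₀ := by rw [hgdef]; ring
      rw [this]; exact abs_add_le _ _
    have h2 : |g x| ≤ M * G x := by
      have h3 := Real.add_one_le_exp |g x|
      linarith [hdomg x]
    simp only [Pi.add_apply]
    linarith
  have hint_g : Integrable g μ := hint_f.sub (integrable_const _)
  clear_value G g M
  set m := ∫ x, g x ∂μ with hm
  -- Jensen : exp(-m) ≤ ∫ exp(-g)
  have hJ : Real.exp (-m) ≤ ∫ x, Real.exp (-g x) ∂μ := by
    have hlin : Integrable (fun x => Real.exp (-m) * (1 + m - g x)) μ :=
      (((integrable_const (1 + m)).sub hint_g).const_mul _)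
    have hpt : ∀ x, Real.exp (-m) * (1 + m - g x) ≤ Real.exp (-g x) := by
      intro x
      have h := Real.add_one_le_exp (m - g x)
      have h2 : Real.exp (-m) * ((m - g x) + 1) ≤ Real.exp (-m) * Real.exp (m - g x) :=
        mul_le_mul_of_nonneg_left h (Real.exp_pos _).le
      rw [← Real.exp_add] at h2
      have h3 : -m + (m - g x) = -g x := by ring
      rw [h3] at h2
      calc Real.exp (-m) * (1 + m - g x) = Real.exp (-m) * ((m - g x) + 1) := by ring
      _ ≤ Real.exp (-g x) := h2
    have hmono := integral_mono hlin hint_expneg hpt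
    have hcomp : ∫ x, Real.exp (-m) * (1 + m - g x) ∂μ = Real.exp (-m) := by
      rw [integral_const_mul, integral_sub ((integrable_const (1 + m))) hint_g]
      rw [integral_const]
      simp [measure_univ, ← hm]
    rw [hcomp] at hmono
    exact hmono
  set X := ∫ x, Real.exp (g x) ∂μ with hX
  set Y := ∫ x, Real.exp (-g x) ∂μ with hY
  clear_value m
  have hX0 : 0 ≤ X := integral_nonneg fun x => (Real.exp_pos _).le
  have hY0 : 0 ≤ Y := integral_nonneg fun x => (Real.exp_pos _).le
  have hC_eq : ∫ x, (Real.exp (g x) + Real.exp (-g x)) / 2 ∂μ = (X + Y) / 2 := by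
    rw [integral_div, integral_add hint_exp hint_expneg]
  have hCint : Integrable (fun x => (Real.exp (g x) + Real.exp (-g x)) / 2) μ :=
    (hint_exp.add hint_expneg).div_const 2
  -- relating main integral
  have hm_eq : m = (∫ y, f y ∂μ) - f x₀ := by
    rw [hm, hgdef]
    rw [integral_sub hint_f (integrable_const _), integral_const]
    simp [measure_univ]
  have hfm : ∀ x, f x - ∫ y, f y ∂μ = g x - m := by
    intro x
    rw [hm_eq, hgdef]
    ring
  have hint_main : Integrable (fun x => Real.exp (f x - ∫ y, f y ∂μ)) μ := by
    have heq : (fun x => Real.exp (f x - ∫ y, f y ∂μ))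
        = fun x => Real.exp (-m) * Real.exp (g x) := by
      funext x
      rw [hfm x, sub_eq_add_neg, add_comm, Real.exp_add]
    rw [heq]
    exact hint_exp.const_mul _
  have hmain_eq : ∫ x, Real.exp (f x - ∫ y, f y ∂μ) ∂μ = Real.exp (-m) * X := by
    rw [hX, ← integral_const_mul]
    congr 1
    funext x
    rw [hfm x, sub_eq_add_neg, add_comm, Real.exp_add]
  clear_value X Y
  have hprod : Real.exp (-m) * X ≤ ((X + Y) / 2) ^ 2 := by
    have h1 : Real.exp (-m) * X ≤ Y * X := mul_le_mul_of_nonneg_right hJ hX0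
    nlinarith [sq_nonneg (X - Y)]
  -- it suffices to bound (X+Y)/2
  have hsuff : ∀ c : ℝ, (X + Y) / 2 ≤ Real.exp c →
      2 * c ≤ b ^ 2 * Real.exp 1 / (2 * a * s) * L ^ 2 →
      ∫ x, Real.exp (f x - ∫ y, f y ∂μ) ∂μ
        ≤ Real.exp (b ^ 2 * Real.exp 1 / (2 * a * s) * L ^ 2) := by
    intro c hc hcle
    rw [hmain_eq]
    have h2 : ((X + Y) / 2) ^ 2 ≤ Real.exp c ^ 2 :=
      pow_le_pow_left₀ (by linarith) hc 2
    have h3 : Real.exp c ^ 2 = Real.exp (2 * c) := by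
      rw [sq, ← Real.exp_add]; ring_nf
    have h4 : Real.exp (2 * c) ≤ Real.exp (b ^ 2 * Real.exp 1 / (2 * a * s) * L ^ 2) :=
      Real.exp_le_exp.2 hcle
    linarith [hprod]
  have hmainR : ∫ x, Real.exp (f x - ∫ y, f y ∂μ) ∂μ
      ≤ Real.exp (b ^ 2 * Real.exp 1 / (2 * a * s) * L ^ 2) := by
    rcases le_or_gt (L ^ 2) (2 * a) with hcase | hcase
    · -- small Lipschitz norm
      set θ := L ^ 2 / (2 * a) with hθ
      have hθ0 : 0 ≤ θ := by positivity
      have hθ1 : θ ≤ 1 := by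
        rw [hθ, div_le_one (by linarith)]; exact hcase
      clear_value θ
      have hpt : ∀ x, (Real.exp (g x) + Real.exp (-g x)) / 2 ≤ θ * G x + (1 - θ) := by
        intro x
        have h1 : (Real.exp (g x) + Real.exp (-g x)) / 2 ≤ Real.exp ((g x) ^ 2 / 2) := by
          have := Real.cosh_le_exp_half_sq (g x)
          rwa [Real.cosh_eq] at this
        have h2 : (g x) ^ 2 ≤ L ^ 2 * dist x₀ x ^ 2 := by
          have h3 := hgb x
          have h4 : |g x| ^ 2 ≤ (L * dist x₀ x) ^ 2 :=
            pow_le_pow_left₀ (abs_nonneg _) h3 2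
          rw [sq_abs] at h4
          nlinarith
        have h5 : (g x) ^ 2 / 2 ≤ θ * (a * dist x₀ x ^ 2) := by
          have : θ * (a * dist x₀ x ^ 2) = L ^ 2 * dist x₀ x ^ 2 / 2 := by
            rw [hθ]; field_simp
          rw [this]; linarith
        have h6 : Real.exp ((g x) ^ 2 / 2) ≤ Real.exp (θ * (a * dist x₀ x ^ 2)) :=
          Real.exp_le_exp.2 h5
        have h7 : Real.exp (θ * (a * dist x₀ x ^ 2)) ≤ θ * G x + (1 - θ) := by
          have hc := convexOn_exp.2 (Set.mem_univ (a * dist x₀ x ^ 2)) (Set.mem_univ (0:ℝ))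
            hθ0 (by linarith : (0:ℝ) ≤ 1 - θ) (by ring)
          simp only [smul_eq_mul, mul_zero, add_zero, Real.exp_zero, mul_one] at hc
          rw [hGdef]
          exact hc
        linarith
      have hrhsint : Integrable (fun x => θ * G x + (1 - θ)) μ :=
        (hGint.const_mul θ).add (integrable_const _)
      have hmono := integral_mono hCint hrhsint hpt
      rw [hC_eq] at hmono
      have hrhs : ∫ x, (θ * G x + (1 - θ)) ∂μ = θ * (∫ x, G x ∂μ) + (1 - θ) := by
        rw [integral_add (hGint.const_mul θ) (integrable_const _), integral_const_mul,
          integral_const]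
        simp [measure_univ]
      rw [hrhs] at hmono
      have hC : (X + Y) / 2 ≤ Real.exp (θ * (b - 1)) := by
        have h8 : θ * (∫ x, G x ∂μ) ≤ θ * b := mul_le_mul_of_nonneg_left hBle hθ0
        have h9 := Real.add_one_le_exp (θ * (b - 1))
        have h10 : θ * b + (1 - θ) = θ * (b - 1) + 1 := by ring
        linarith
      refine hsuff (θ * (b - 1)) hC ?_
      have hq : (b - 1) / a ≤ b ^ 2 * Real.exp 1 / (2 * a * s) := by
        rw [div_le_div_iff₀ ha (by positivity)]
        nlinarith [mul_nonneg (mul_nonneg ha.le hsp.le) (sq_nonneg (b - 1)),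
          mul_nonneg ha.le (mul_nonneg (sub_nonneg.2 hes.le) (sq_nonneg b)),
          mul_nonneg ha.le hsp.le]
      have h11 : 2 * (θ * (b - 1)) = (b - 1) / a * L ^ 2 := by
        rw [hθ]; field_simp
      rw [h11]
      exact mul_le_mul_of_nonneg_right hq (sq_nonneg L)
    · -- large Lipschitz norm
      have hpt : ∀ x, (Real.exp (g x) + Real.exp (-g x)) / 2 ≤ M * G x := by
        intro x
        have h1 : Real.exp (g x) ≤ Real.exp |g x| := Real.exp_le_exp.2 (le_abs_self _)
        have h2 : Real.exp (-g x) ≤ Real.exp |g x| := Real.exp_le_exp.2 (neg_le_abs _)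
        linarith [hdomg x]
      have hmono := integral_mono hCint hMG hpt
      rw [hC_eq, integral_const_mul] at hmono
      have hC : (X + Y) / 2 ≤ Real.exp (L ^ 2 / (4 * a) + Real.log b) := by
        have h3 : M * ∫ x, G x ∂μ ≤ M * b := mul_le_mul_of_nonneg_left hBle hM0.le
        have h4 : M * b = Real.exp (L ^ 2 / (4 * a) + Real.log b) := by
          rw [Real.exp_add, Real.exp_log hb0, hMdef]
        linarith
      refine hsuff _ hC ?_
      have hlog : Real.log b ≤ b - 1 := Real.log_le_sub_one_of_pos hb0
      rw [← sub_nonneg]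
      have key : b ^ 2 * Real.exp 1 / (2 * a * s) * L ^ 2
          - 2 * (L ^ 2 / (4 * a) + Real.log b)
          = (b ^ 2 * Real.exp 1 * L ^ 2 - L ^ 2 * s - 4 * a * s * Real.log b)
            / (2 * a * s) := by
        field_simp
        ring
      rw [key]
      apply div_nonneg _ (by positivity)
      have hb2 : 1 ≤ b ^ 2 := by nlinarith
      have he1 : (0:ℝ) < Real.exp 1 := Real.exp_pos 1
      have hsbe : s ≤ b ^ 2 * Real.exp 1 := by
        nlinarith [mul_nonneg (sub_nonneg.2 hb2) he1.le]
      nlinarith [mul_nonneg (sub_nonneg.2 hcase.le) (sub_nonneg.2 hsbe),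
        mul_nonneg (mul_nonneg ha.le hsp.le) (sq_nonneg (b - 1)),
        mul_nonneg ha.le (mul_nonneg (sub_nonneg.2 hes.le) (sq_nonneg b)),
        mul_nonneg (mul_nonneg ha.le hsp.le) (sub_nonneg.2 hlog)]
  refine ⟨hint_f, ?_⟩
  have hfin : ∫⁻ x, ENNReal.ofReal (Real.exp (f x - ∫ y, f y ∂μ)) ∂μ
      = ENNReal.ofReal (∫ x, Real.exp (f x - ∫ y, f y ∂μ) ∂μ) :=
    (ofReal_integral_eq_lintegral_ofReal hint_main
      (Filter.Eventually.of_forall fun x => (Real.exp_pos _).le)).symm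
  rw [hfin]
  exact ENNReal.ofReal_le_ofReal hmainR
end

section
/- For every continuously differentiable function v : [0,1] → ℝ with v(0) = v(1) = 0, one has ∫₀¹ v(x)⁴ dx ≤ 4 (∫₀¹ v(x)² dx) (∫₀¹ v′(x)² dx). -/
open MeasureTheory intervalIntegral

/-- Ladyzhenskaya-type interpolation inequality on `[0,1]`: for `v ∈ C¹` with
`v(0) = v(1) = 0`, `∫₀¹ v⁴ ≤ 4 (∫₀¹ v²)(∫₀¹ v′²)`. -/
theorem l4_interpolation (v : ℝ → ℝ) (hv : ContDiff ℝ 1 v) (h0 : v 0 = 0) (h1 : v 1 = 0) :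
    ∫ x in (0:ℝ)..1, v x ^ 4 ≤
      4 * (∫ x in (0:ℝ)..1, v x ^ 2) * ∫ x in (0:ℝ)..1, deriv v x ^ 2 := by
  have hvc : Continuous v := hv.continuous
  have hdc : Continuous (deriv v) := hv.continuous_deriv le_rfl
  set A := ∫ x in (0:ℝ)..1, v x ^ 2 with hA
  set B := ∫ x in (0:ℝ)..1, deriv v x ^ 2 with hB
  set I := ∫ x in (0:ℝ)..1, |v x| * |deriv v x| with hI
  have int1 : IntervalIntegrable (fun x => v x ^ 2) volume 0 1 :=
    (hvc.pow 2).intervalIntegrable 0 1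
  have int2 : IntervalIntegrable (fun x => deriv v x ^ 2) volume 0 1 :=
    (hdc.pow 2).intervalIntegrable 0 1
  have int3 : IntervalIntegrable (fun x => |v x| * |deriv v x|) volume 0 1 :=
    (hvc.abs.mul hdc.abs).intervalIntegrable 0 1
  have hInn : (0:ℝ) ≤ I :=
    integral_nonneg (by norm_num) fun x _ => mul_nonneg (abs_nonneg _) (abs_nonneg _)
  -- Cauchy–Schwarz: I ^ 2 ≤ A * B
  have key : I ^ 2 ≤ A * B := by
    have hq : ∀ t : ℝ, 0 ≤ B * (t * t) + (-(2 * I)) * t + A := by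
      intro t
      have hexp : ∀ x : ℝ, (t * |deriv v x| - |v x|) ^ 2
          = t ^ 2 * deriv v x ^ 2 - 2 * t * (|v x| * |deriv v x|) + v x ^ 2 := by
        intro x
        rw [sub_sq, mul_pow, sq_abs, sq_abs]
        ring
      have hnn : 0 ≤ ∫ x in (0:ℝ)..1, (t * |deriv v x| - |v x|) ^ 2 :=
        integral_nonneg (by norm_num) fun x _ => sq_nonneg _
      have heq : ∫ x in (0:ℝ)..1, (t * |deriv v x| - |v x|) ^ 2
          = t ^ 2 * B - 2 * t * I + A := by
        simp_rw [hexp]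
        rw [integral_add ((int2.const_mul _).sub (int3.const_mul _)) int1,
          integral_sub (int2.const_mul _) (int3.const_mul _),
          intervalIntegral.integral_const_mul, intervalIntegral.integral_const_mul]
      nlinarith [hnn, heq]
    have h := discrim_le_zero hq
    rw [discrim] at h
    nlinarith
  -- pointwise bound: v x ^ 2 ≤ 2 I on [0,1]
  have sup : ∀ x ∈ Set.Icc (0:ℝ) 1, v x ^ 2 ≤ 2 * I := by
    intro x hx
    have ftc : ∫ t in (0:ℝ)..x, 2 * v t * deriv v t = v x ^ 2 := by
      have hd : ∀ t ∈ Set.uIcc (0:ℝ) x,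
          HasDerivAt (fun y => v y ^ 2) (2 * v t * deriv v t) t := by
        intro t _
        have := ((hv.differentiable one_ne_zero t).hasDerivAt).fun_pow 2
        simpa [mul_comm, mul_assoc, mul_left_comm] using this
      rw [integral_eq_sub_of_hasDerivAt hd
        (((continuous_const.mul hvc).mul hdc).intervalIntegrable 0 x)]
      simp [h0]
    have step1 : ∫ t in (0:ℝ)..x, 2 * v t * deriv v t
        ≤ ∫ t in (0:ℝ)..x, 2 * (|v t| * |deriv v t|) := by
      apply integral_mono_on hx.1
        (((continuous_const.mul hvc).mul hdc).intervalIntegrable 0 x)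
        ((continuous_const.mul (hvc.abs.mul hdc.abs)).intervalIntegrable 0 x)
      intro t _
      calc 2 * v t * deriv v t ≤ |2 * v t * deriv v t| := le_abs_self _
        _ = 2 * (|v t| * |deriv v t|) := by
            rw [abs_mul, abs_mul, abs_two]; ring
    have step2 : ∫ t in (0:ℝ)..x, 2 * (|v t| * |deriv v t|)
        ≤ ∫ t in (0:ℝ)..1, 2 * (|v t| * |deriv v t|) := by
      apply integral_mono_interval le_rfl hx.1 hx.2
      · filter_upwards with t
        exact mul_nonneg (by norm_num) (mul_nonneg (abs_nonneg _) (abs_nonneg _))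
      · exact (continuous_const.mul (hvc.abs.mul hdc.abs)).intervalIntegrable 0 1
    have : ∫ t in (0:ℝ)..1, 2 * (|v t| * |deriv v t|) = 2 * I := by
      rw [hI, intervalIntegral.integral_const_mul]
    linarith [ftc ▸ (step1.trans step2), this ▸ (step1.trans step2)]
  -- conclude
  have pt : ∀ x ∈ Set.Icc (0:ℝ) 1, v x ^ 4 ≤ 4 * I ^ 2 := by
    intro x hx
    have h2 := sup x hx
    nlinarith [sq_nonneg (v x), sq_nonneg (v x ^ 2)]
  calc ∫ x in (0:ℝ)..1, v x ^ 4
      ≤ ∫ _x in (0:ℝ)..1, 4 * I ^ 2 := by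
        apply integral_mono_on (by norm_num) ((hvc.pow 4).intervalIntegrable 0 1)
          intervalIntegrable_const pt
    _ = 4 * I ^ 2 := by simp
    _ ≤ 4 * (A * B) := by linarith
    _ = 4 * A * B := by ring
end
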